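/- There exist constants C, d > 0 (depending only on η and α) such that for all sufficiently large n and all j,k ≥ 1, the resolvent of the free Jacobi operator satisfies |((J̃ − (−2 + η/n^α) Id)^{−1})_{j,k}| ≤ C n^{α/2} e^{−d n^{−α/2}|j−k|}. Consequently, for any m_1 > m_2 ≥ 0, the Hilbert–Schmidt norm bound ‖P_{m_1} Q_{m_2} (J̃ − (−2 + η/n^α))^{−1}‖_2 ≤ √(C_0 n^{3α/2}(m_1 − m_2)) holds for some constant C_0 > 0. -/

import Mathlib

noncomputable section

/-- The Hilbert space `ℓ²(ℕ, ℂ)`. -/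
abbrev l2 : Type := lp (fun _ : ℕ => ℂ) 2

lemma absjk (j k : ℕ) : |(j : ℝ) - (k : ℝ)| = ((max j k - min j k : ℕ) : ℝ) := by
  rcases le_total j k with h | h
  · have h1 : max j k - min j k = k - j := by omega
    rw [h1, Nat.cast_sub h, abs_sub_comm, abs_of_nonneg (sub_nonneg.2 (Nat.cast_le.2 h))]
  · have h1 : max j k - min j k = j - k := by omega
    rw [h1, Nat.cast_sub h, abs_of_nonneg (sub_nonneg.2 (Nat.cast_le.2 h))]

lemma exists_omega (z : ℂ) (hz : z.im ≠ 0) :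
    ∃ ω : ℂ, ω ^ 2 - z * ω + 1 = 0 ∧ ‖ω‖ < 1 := by
  obtain ⟨s, hs⟩ := IsAlgClosed.exists_pow_nat_eq (z ^ 2 - 4) (n := 2) (by norm_num)
  have hroot1 : ((z + s) / 2) ^ 2 - z * ((z + s) / 2) + 1 = 0 := by
    linear_combination ((1:ℂ)/4) * hs
  have hroot2 : ((z - s) / 2) ^ 2 - z * ((z - s) / 2) + 1 = 0 := by
    linear_combination ((1:ℂ)/4) * hs
  have habs_ne : ∀ ω : ℂ, ω ^ 2 - z * ω + 1 = 0 → ‖ω‖ ≠ 1 := by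
    intro ω hq habs
    have hω0 : ω ≠ 0 := by
      intro h; rw [h] at hq; simp at hq
    have hns : Complex.normSq ω = 1 := by
      rw [← Complex.sq_norm, habs]; norm_num
    have hzin : z = ω + ω⁻¹ := by
      field_simp
      linear_combination -hq
    apply hz
    rw [hzin, Complex.add_im, Complex.inv_im, hns]
    ring
  have hprod : ‖(z + s) / 2‖ * ‖(z - s) / 2‖ = 1 := by
    rw [← norm_mul]
    have : (z + s) / 2 * ((z - s) / 2) = 1 := by linear_combination (-(1:ℂ)/4) * hs
    rw [this, norm_one]
  rcases le_total (‖(z + s) / 2‖) 1 with h | h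
  · exact ⟨_, hroot1, lt_of_le_of_ne h (habs_ne _ hroot1)⟩
  · refine ⟨_, hroot2, lt_of_le_of_ne ?_ (habs_ne _ hroot2)⟩
    nlinarith [norm_nonneg ((z - s) / 2)]

set_option maxHeartbeats 2000000 in
lemma core (ε : ℂ) (hεim : ε.im ≠ 0) (hε : ‖ε‖ ≤ 1 / 4)
    (J G : l2 →L[ℂ] l2)
    (hJ : ∀ (x : l2) (j : ℕ), (J x) j = (if j = 0 then 0 else x (j - 1)) + x (j + 1))
    (hG1 : G * (J - ((-2 : ℂ) + ε) • 1) = 1) :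
    ∀ j k : ℕ, ‖(G (lp.single 2 k 1)) j‖ ≤
      (2 / Real.sqrt (3 * ‖ε‖)) *
        Real.exp (-(|ε.im| / (8 * Real.sqrt (‖ε‖))) *
          ((max j k - min j k : ℕ) : ℝ)) := by
  have hε0 : ε ≠ 0 := fun h => hεim (by simp [h])
  have hεabs : 0 < ‖ε‖ := norm_pos_iff.mpr hε0
  have hzim : ((-2 : ℂ) + ε).im ≠ 0 := by
    simpa [Complex.add_im] using hεim
  obtain ⟨ω, hq, hrlt⟩ := exists_omega ((-2 : ℂ) + ε) hzim
  have hω0 : ω ≠ 0 := by intro h; rw [h] at hq; simp at hq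
  set r := ‖ω‖ with hrdef
  have hr0 : 0 < r := norm_pos_iff.mpr hω0
  have hu : ω * ω⁻¹ = 1 := mul_inv_cancel₀ hω0
  have hzsum : ω + ω⁻¹ = (-2 : ℂ) + ε := by
    field_simp
    linear_combination hq
  have hsq : (ω + 1) ^ 2 = ε * ω := by linear_combination hq
  have habs_sq : ‖ω + 1‖ ^ 2 = ‖ε‖ * r := by
    rw [← norm_pow, hsq, norm_mul]
  have h1half : ‖ω + 1‖ ≤ 1 / 2 := by
    nlinarith [norm_nonneg (ω + 1), hrlt, hεabs]
  have hrhalf : (1 : ℝ) / 2 ≤ r := by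
    have htri : ‖(ω + 1) - ω‖ ≤ ‖ω + 1‖ + ‖ω‖ := norm_sub_le _ _
    simp only [add_sub_cancel_left, norm_one] at htri
    linarith
  -- Wronskian
  have hwsq : (ω - ω⁻¹) ^ 2 = ε * (ε - 4) := by
    linear_combination (ω + ω⁻¹ + (-2 + ε)) * hzsum + (-4 : ℂ) * hu
  have habs_w : ‖ω - ω⁻¹‖ ^ 2 = ‖ε‖ * ‖ε - 4‖ := by
    rw [← norm_pow, hwsq, norm_mul]
  have hε4 : 3 ≤ ‖ε - 4‖ := by
    have h4 : ‖(4 : ℂ)‖ - ‖ε‖ ≤ ‖(4 : ℂ) - ε‖ := norm_sub_norm_le _ _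
    rw [norm_sub_rev] at h4
    have : ‖(4 : ℂ)‖ = 4 := by
      rw [show (4 : ℂ) = ((4 : ℝ) : ℂ) by norm_num, Complex.norm_real]; norm_num
    rw [this] at h4
    linarith
  have hwabs_low : Real.sqrt (3 * ‖ε‖) ≤ ‖ω - ω⁻¹‖ := by
    rw [show ‖ω - ω⁻¹‖ = Real.sqrt (‖ω - ω⁻¹‖ ^ 2) by
      rw [Real.sqrt_sq (norm_nonneg _)]]
    apply Real.sqrt_le_sqrt
    nlinarith
  have hw_ne : ω - ω⁻¹ ≠ 0 := by
    intro h
    rw [h, norm_zero] at habs_w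
    nlinarith
  -- imaginary part estimates
  have hns_eq : Complex.normSq ω = r ^ 2 := (Complex.sq_norm ω).symm
  have him : ω.im - ω.im / r ^ 2 = ε.im := by
    have h := congrArg Complex.im hzsum
    rw [Complex.add_im, Complex.add_im, Complex.inv_im, hns_eq, neg_div] at h
    have h2 : ((-2 : ℂ)).im = 0 := by simp
    rw [h2] at h
    linarith [h]
  have hiω : ω.im ≠ 0 := by
    intro h
    rw [h] at him
    simp at him
    exact hεim him.symm
  have himul : ε.im * r ^ 2 = ω.im * (r ^ 2 - 1) := by
    have hr2 : r ^ 2 ≠ 0 := by positivity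
    field_simp at him
    linear_combination -him
  have himω_le : |ω.im| ≤ Real.sqrt (‖ε‖) := by
    have h1 : |ω.im| = |(ω + 1).im| := by simp [Complex.add_im]
    rw [h1]
    refine le_trans (Complex.abs_im_le_norm _) ?_
    rw [show Real.sqrt (‖ε‖) = Real.sqrt (‖ε‖ * 1) by rw [mul_one]]
    rw [show ‖ω + 1‖ = Real.sqrt (‖ω + 1‖ ^ 2) by
      rw [Real.sqrt_sq (norm_nonneg _)]]
    apply Real.sqrt_le_sqrt
    nlinarith
  set dd := |ε.im| / (8 * Real.sqrt (‖ε‖)) with hdddef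
  have hsε : 0 < Real.sqrt (‖ε‖) := Real.sqrt_pos.2 hεabs
  have hdd0 : 0 < dd := div_pos (abs_pos.2 hεim) (by positivity)
  have hrbound : r ≤ 1 - dd := by
    have hs1 : r ^ 2 < 1 := by nlinarith
    have hs14 : (1 : ℝ) / 4 ≤ r ^ 2 := by nlinarith
    have habs_eq : |ε.im| * r ^ 2 = |ω.im| * (1 - r ^ 2) := by
      have h1 : |ε.im * r ^ 2| = |ω.im * (r ^ 2 - 1)| := by rw [himul]
      rw [abs_mul, abs_mul, abs_of_pos (by positivity : (0:ℝ) < r ^ 2)] at h1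
      rw [abs_of_neg (by linarith : r ^ 2 - 1 < 0)] at h1
      linarith [h1]
    -- |ε.im| ≤ 8 * sqrt|ε| * (1 - r)
    have hkey : |ε.im| ≤ 8 * Real.sqrt (‖ε‖) * (1 - r) := by
      have e1 : |ω.im| * (1 - r ^ 2) ≤ Real.sqrt (‖ε‖) * (1 - r ^ 2) :=
        mul_le_mul_of_nonneg_right himω_le (by nlinarith)
      have e2 : |ε.im| ≤ 4 * (|ε.im| * r ^ 2) := by nlinarith [abs_nonneg ε.im]
      have e3 : Real.sqrt (‖ε‖) * ((1 - r) * (1 + r)) ≤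
          Real.sqrt (‖ε‖) * ((1 - r) * 2) := by
        apply mul_le_mul_of_nonneg_left _ hsε.le
        apply mul_le_mul_of_nonneg_left (by linarith) (by linarith)
      calc |ε.im| ≤ 4 * (|ε.im| * r ^ 2) := e2
        _ = 4 * (|ω.im| * (1 - r ^ 2)) := by rw [habs_eq]
        _ ≤ 4 * (Real.sqrt (‖ε‖) * (1 - r ^ 2)) := by linarith
        _ = 4 * (Real.sqrt (‖ε‖) * ((1 - r) * (1 + r))) := by ring
        _ ≤ 4 * (Real.sqrt (‖ε‖) * ((1 - r) * 2)) := by linarith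
        _ = 8 * Real.sqrt (‖ε‖) * (1 - r) := by ring
    have h48 : |ε.im| / (8 * Real.sqrt (‖ε‖)) ≤ 1 - r := by
      rw [div_le_iff₀ (by positivity)]
      nlinarith [hkey]
    rw [hdddef]
    linarith
  -- fix j k and construct the column
  intro j k
  set c := (ω - ω⁻¹)⁻¹ with hcdef
  have hc : (ω - ω⁻¹) * c = 1 := mul_inv_cancel₀ hw_ne
  have hcabs : ‖c‖ ≤ 1 / Real.sqrt (3 * ‖ε‖) := by
    rw [hcdef, norm_inv, one_div]
    exact inv_anti₀ (by positivity) hwabs_low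
  set g : ℕ → ℂ := fun i => (ω ^ (max i k - min i k) - ω ^ (i + k + 2)) * c with hgdef
  have hgb : ∀ i, ‖g i‖ ≤ 2 * r ^ (max i k - min i k) * ‖c‖ := by
    intro i
    have h1 : ‖ω ^ (max i k - min i k) - ω ^ (i + k + 2)‖ ≤
        r ^ (max i k - min i k) + r ^ (i + k + 2) := by
      refine le_trans (norm_sub_le _ _) ?_
      simp [norm_pow, hrdef]
    have h2 : r ^ (i + k + 2) ≤ r ^ (max i k - min i k) :=
      pow_le_pow_of_le_one hr0.le hrlt.le (by omega)
    have h3 : ‖g i‖ = ‖ω ^ (max i k - min i k) - ω ^ (i + k + 2)‖ *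
        ‖c‖ := by
      rw [hgdef]; simp [norm_mul]
    rw [h3]
    nlinarith [norm_nonneg c, pow_nonneg hr0.le (max i k - min i k)]
  have hgeo : ∀ i, r ^ (max i k - min i k) ≤ r ^ i / r ^ k := by
    intro i
    rw [le_div_iff₀ (by positivity : (0:ℝ) < r ^ k), ← pow_add]
    exact pow_le_pow_of_le_one hr0.le hrlt.le (by omega)
  have hmem : Memℓp g 2 := by
    apply memℓp_gen
    have h2 : ((2 : ENNReal)).toReal = ((2 : ℕ) : ℝ) := by simp
    simp only [h2, Real.rpow_natCast]
    refine Summable.of_nonneg_of_le (fun i => by positivity) (fun i => ?_)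
      ((summable_geometric_of_lt_one (r := r ^ 2) (by positivity) (by nlinarith)).mul_left
        ((2 * ‖c‖ / r ^ k) ^ 2))
    have h1 : ‖g i‖ ≤ 2 * ‖c‖ / r ^ k * r ^ i := by
      refine le_trans (hgb i) ?_
      have h0 := hgeo i
      have hcn := norm_nonneg c
      calc 2 * r ^ (max i k - min i k) * ‖c‖
          ≤ 2 * (r ^ i / r ^ k) * ‖c‖ := by nlinarith
        _ = 2 * ‖c‖ / r ^ k * r ^ i := by ring
    calc ‖g i‖ ^ 2 ≤ (2 * ‖c‖ / r ^ k * r ^ i) ^ 2 :=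
          pow_le_pow_left₀ (norm_nonneg _) h1 2
      _ = (2 * ‖c‖ / r ^ k) ^ 2 * (r ^ 2) ^ i := by ring
  set gl : l2 := ⟨g, hmem⟩ with hgldef
  have hglco : ∀ t, (gl : ∀ _ : ℕ, ℂ) t = g t := fun _ => rfl
  have happly : (J - ((-2 : ℂ) + ε) • 1) gl = lp.single 2 k 1 := by
    apply lp.ext
    funext i
    have hL : ((J - ((-2 : ℂ) + ε) • 1) gl : ∀ _ : ℕ, ℂ) i
        = (J gl) i - ((-2 : ℂ) + ε) * gl i := by
      rw [ContinuousLinearMap.sub_apply, ContinuousLinearMap.smul_apply,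
        ContinuousLinearMap.one_apply, lp.coeFn_sub, Pi.sub_apply, lp.coeFn_smul,
        Pi.smul_apply, smul_eq_mul]
    rw [hL, hJ gl i, ← hzsum]
    have hsingle : (lp.single 2 k (1 : ℂ) : ∀ _ : ℕ, ℂ) i = if i = k then 1 else 0 := by
      simp [lp.single_apply, Pi.single_apply]
    rw [hsingle]
    by_cases hi0 : i = 0
    · subst hi0
      rw [if_pos rfl]
      cases k with
      | zero =>
        rw [if_pos rfl]
        have e1 : max 1 0 - min 1 0 = 1 := by omega
        have e0 : max 0 0 - min 0 0 = 0 := by omega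
        simp only [hglco, hgdef, e1, e0]
        linear_combination hc + (ω * c) * hu
      | succ k' =>
        rw [if_neg (by omega)]
        have e1 : max 1 (k' + 1) - min 1 (k' + 1) = k' := by omega
        have e0 : max 0 (k' + 1) - min 0 (k' + 1) = k' + 1 := by omega
        simp only [hglco, hgdef, e1, e0]
        linear_combination (-(ω ^ k' - ω ^ (k' + 2)) * c) * hu
    · obtain ⟨i', rfl⟩ : ∃ i', i = i' + 1 := ⟨i - 1, by omega⟩
      rw [if_neg hi0]
      simp only [Nat.add_sub_cancel]
      rcases lt_trichotomy (i' + 1) k with hlt | heq | hgt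
      · obtain ⟨m, rfl⟩ : ∃ m, k = i' + m + 2 := ⟨k - i' - 2, by omega⟩
        rw [if_neg (by omega)]
        have e0 : max i' (i' + m + 2) - min i' (i' + m + 2) = m + 2 := by omega
        have e1 : max (i' + 1) (i' + m + 2) - min (i' + 1) (i' + m + 2) = m + 1 := by omega
        have e2 : max (i' + 1 + 1) (i' + m + 2) - min (i' + 1 + 1) (i' + m + 2) = m := by omega
        simp only [hglco, hgdef, e0, e1, e2]
        linear_combination (-(ω ^ m - ω ^ (i' + (i' + m + 2) + 2)) * c) * hu
      · subst heq
        rw [if_pos rfl]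
        have e0 : max i' (i' + 1) - min i' (i' + 1) = 1 := by omega
        have e1 : max (i' + 1) (i' + 1) - min (i' + 1) (i' + 1) = 0 := by omega
        have e2 : max (i' + 1 + 1) (i' + 1) - min (i' + 1 + 1) (i' + 1) = 1 := by omega
        simp only [hglco, hgdef, e0, e1, e2]
        linear_combination hc + (ω ^ (i' + (i' + 1) + 2) * c) * hu
      · obtain ⟨m, rfl⟩ : ∃ m, i' = k + m := ⟨i' - k, by omega⟩
        rw [if_neg (by omega)]
        have e0 : max (k + m) k - min (k + m) k = m := by omega
        have e1 : max (k + m + 1) k - min (k + m + 1) k = m + 1 := by omega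
        have e2 : max (k + m + 1 + 1) k - min (k + m + 1 + 1) k = m + 2 := by omega
        simp only [hglco, hgdef, e0, e1, e2]
        linear_combination (-(ω ^ m - ω ^ (k + m + k + 2)) * c) * hu
  have hcol : G (lp.single 2 k 1) = gl := by
    calc G (lp.single 2 k 1) = G ((J - ((-2 : ℂ) + ε) • 1) gl) := by rw [happly]
      _ = (G * (J - ((-2 : ℂ) + ε) • 1)) gl := rfl
      _ = (1 : l2 →L[ℂ] l2) gl := by rw [hG1]
      _ = gl := rfl
  rw [hcol, show ((gl : l2) : ∀ _ : ℕ, ℂ) j = g j from rfl]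
  have hrp : r ^ (max j k - min j k) ≤
      Real.exp (-dd * ((max j k - min j k : ℕ) : ℝ)) := by
    have h1 : r ≤ Real.exp (-dd) := by
      have := Real.add_one_le_exp (-dd)
      linarith
    calc r ^ (max j k - min j k) ≤ (Real.exp (-dd)) ^ (max j k - min j k) :=
          pow_le_pow_left₀ hr0.le h1 _
      _ = Real.exp (-dd * ((max j k - min j k : ℕ) : ℝ)) := by
          rw [← Real.exp_nat_mul]
          congr 1
          ring
  calc ‖g j‖ ≤ 2 * r ^ (max j k - min j k) * ‖c‖ := hgb j
    _ ≤ 2 * Real.exp (-dd * ((max j k - min j k : ℕ) : ℝ)) *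
        (1 / Real.sqrt (3 * ‖ε‖)) := by
        apply mul_le_mul (by nlinarith [pow_nonneg hr0.le (max j k - min j k)]) hcabs
          (norm_nonneg c) (by positivity)
    _ = (2 / Real.sqrt (3 * ‖ε‖)) *
        Real.exp (-(|ε.im| / (8 * Real.sqrt (‖ε‖))) *
          ((max j k - min j k : ℕ) : ℝ)) := by
        rw [hdddef]
        ring

set_option maxHeartbeats 2000000 in
/-- There exist constants `C, d > 0` (depending only on `η` and `α`) such
that for all sufficiently large `n` and all `j, k`, the resolvent `G` of the free Jacobi
operator `J̃` at `−2 + η/n^α` satisfies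
`|G_{j,k}| ≤ C n^{α/2} e^{−d n^{−α/2} |j−k|}`, and consequently for `m₁ > m₂ ≥ 0` the
Hilbert–Schmidt bound `‖P_{m₁} Q_{m₂} G‖₂ ≤ √(C₀ n^{3α/2} (m₁ − m₂))` holds for some
`C₀ > 0`.  (0-based indices below.) -/
theorem stmt11 (η : ℂ) (hη : η.im ≠ 0) (α : ℝ) (hα : 0 < α) (hα2 : α < 2) :
    ∃ C > (0 : ℝ), ∃ d > (0 : ℝ), ∃ C₀ > (0 : ℝ), ∃ N₀ : ℕ, ∀ n : ℕ, N₀ ≤ n →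
      ∀ J G : l2 →L[ℂ] l2,
        (∀ (x : l2) (j : ℕ), (J x) j = (if j = 0 then 0 else x (j - 1)) + x (j + 1)) →
        G * (J - ((-2 : ℂ) + η / ((((n : ℝ) ^ α : ℝ)) : ℂ)) • 1) = 1 →
        (J - ((-2 : ℂ) + η / ((((n : ℝ) ^ α : ℝ)) : ℂ)) • 1) * G = 1 →
        (∀ j k : ℕ,
          ‖(G (lp.single 2 k 1)) j‖
            ≤ C * (n : ℝ) ^ (α / 2) *
                Real.exp (-d * (n : ℝ) ^ (-(α / 2)) * |(j : ℝ) - (k : ℝ)|)) ∧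
        (∀ m₁ m₂ : ℕ, m₂ < m₁ →
          Real.sqrt (∑ j ∈ Finset.Ico m₂ m₁, ∑' k : ℕ, ‖(G (lp.single 2 k 1)) j‖ ^ 2)
            ≤ Real.sqrt (C₀ * (n : ℝ) ^ (3 * α / 2) * ((m₁ : ℝ) - (m₂ : ℝ)))) := by
  have hη0 : η ≠ 0 := fun h => hη (by simp [h])
  have hηabs : 0 < ‖η‖ := norm_pos_iff.mpr hη0
  set C := 2 / Real.sqrt (3 * ‖η‖) with hCdef
  set d := |η.im| / (8 * Real.sqrt (‖η‖)) with hddef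
  have hC : 0 < C := div_pos two_pos (Real.sqrt_pos.2 (by positivity))
  have hd : 0 < d := div_pos (abs_pos.2 hη) (by positivity)
  set C₀ := 2 * C ^ 2 * Real.exp (2 * d) / d with hC₀def
  have hC₀ : 0 < C₀ := by positivity
  have htend : Filter.Tendsto (fun n : ℕ => (n : ℝ) ^ α) Filter.atTop Filter.atTop :=
    (tendsto_rpow_atTop hα).comp tendsto_natCast_atTop_atTop
  obtain ⟨N₁, hN₁⟩ := Filter.eventually_atTop.1
    (htend.eventually_ge_atTop (4 * ‖η‖))
  refine ⟨C, hC, d, hd, C₀, hC₀, max N₁ 1, ?_⟩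
  intro n hn J G hJ hG1 hG2
  have hn1 : 1 ≤ n := le_trans (le_max_right _ _) hn
  have hnα4 : 4 * ‖η‖ ≤ (n : ℝ) ^ α := hN₁ n (le_trans (le_max_left _ _) hn)
  have hnpos : (0 : ℝ) < (n : ℝ) := by exact_mod_cast Nat.pos_of_ne_zero (by omega)
  have hnαpos : 0 < (n : ℝ) ^ α := Real.rpow_pos_of_pos hnpos α
  set ε := η / ((((n : ℝ) ^ α : ℝ)) : ℂ) with hεdef
  have hεim : ε.im = η.im / ((n : ℝ) ^ α) := Complex.div_ofReal_im η ((n : ℝ) ^ α)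
  have hεim0 : ε.im ≠ 0 := by rw [hεim]; exact div_ne_zero hη (ne_of_gt hnαpos)
  have hεabs : ‖ε‖ = ‖η‖ / (n : ℝ) ^ α := by
    rw [hεdef, norm_div, Complex.norm_real, Real.norm_eq_abs, abs_of_pos hnαpos]
  have hεle : ‖ε‖ ≤ 1 / 4 := by
    rw [hεabs, div_le_iff₀ hnαpos]; linarith
  have key := core ε hεim0 hεle J G hJ hG1
  -- constant transfers
  have hsqrtα : Real.sqrt ((n : ℝ) ^ α) = (n : ℝ) ^ (α / 2) := by
    rw [Real.sqrt_eq_rpow, ← Real.rpow_mul (le_of_lt hnpos),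
      show α * (1 / 2) = α / 2 by ring]
  have hsqrtabs : Real.sqrt (‖ε‖)
      = Real.sqrt (‖η‖) / (n : ℝ) ^ (α / 2) := by
    rw [hεabs, Real.sqrt_div (norm_nonneg η), hsqrtα]
  have hn2ne : ((n : ℝ) ^ (α / 2)) ≠ 0 := by positivity
  have hCtrans : 2 / Real.sqrt (3 * ‖ε‖) = C * (n : ℝ) ^ (α / 2) := by
    rw [hεabs, show 3 * (‖η‖ / (n : ℝ) ^ α) = 3 * ‖η‖ / (n : ℝ) ^ α by ring,
      Real.sqrt_div (by positivity), hsqrtα, hCdef]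
    have h1 : Real.sqrt (3 * ‖η‖) ≠ 0 := by positivity
    field_simp
  have hνneg : (n : ℝ) ^ (-(α / 2)) = ((n : ℝ) ^ (α / 2))⁻¹ := Real.rpow_neg hnpos.le _
  have hα2split : (n : ℝ) ^ α = (n : ℝ) ^ (α / 2) * (n : ℝ) ^ (α / 2) := by
    rw [← Real.rpow_add hnpos]; congr 1; ring
  have hdtrans : |ε.im| / (8 * Real.sqrt (‖ε‖)) = d * (n : ℝ) ^ (-(α / 2)) := by
    rw [hεim, abs_div, abs_of_pos hnαpos, hsqrtabs, hddef, hνneg, hα2split]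
    have h3 : Real.sqrt (‖η‖) ≠ 0 := by positivity
    field_simp
  have part1 : ∀ j k : ℕ,
      ‖(G (lp.single 2 k 1)) j‖ ≤ C * (n : ℝ) ^ (α / 2) *
        Real.exp (-d * (n : ℝ) ^ (-(α / 2)) * |(j : ℝ) - (k : ℝ)|) := by
    intro j k
    have h := key j k
    rw [hCtrans, hdtrans] at h
    have harg : -(d * (n : ℝ) ^ (-(α / 2))) * ((max j k - min j k : ℕ) : ℝ)
        = -d * (n : ℝ) ^ (-(α / 2)) * |(j : ℝ) - (k : ℝ)| := by
      rw [absjk j k]; ring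
    rwa [harg] at h
  refine ⟨part1, ?_⟩
  intro m₁ m₂ hm
  apply Real.sqrt_le_sqrt
  set x := d * (n : ℝ) ^ (-(α / 2)) with hxdef
  have hx0 : 0 < x := mul_pos hd (Real.rpow_pos_of_pos hnpos _)
  have hxd : x ≤ d := by
    have h1 : (n : ℝ) ^ (-(α / 2)) ≤ 1 :=
      Real.rpow_le_one_of_one_le_of_nonpos (by exact_mod_cast hn1) (by linarith)
    nlinarith
  set q := Real.exp (-(2 * x)) with hqdef
  have hq0 : 0 < q := Real.exp_pos _
  have hq1 : q < 1 := by rw [hqdef]; exact Real.exp_lt_one_iff.2 (by linarith)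
  set A := (C * (n : ℝ) ^ (α / 2)) ^ 2 with hAdef
  have hA0 : 0 < A := by positivity
  have hfb : ∀ j k : ℕ, ‖(G (lp.single 2 k 1)) j‖ ^ 2 ≤ A * q ^ (max j k - min j k) := by
    intro j k
    have h2 : ‖(G (lp.single 2 k 1)) j‖ ^ 2 ≤ (C * (n : ℝ) ^ (α / 2) *
        Real.exp (-d * (n : ℝ) ^ (-(α / 2)) * |(j : ℝ) - (k : ℝ)|)) ^ 2 :=
      pow_le_pow_left₀ (norm_nonneg _) (part1 j k) 2
    refine le_trans h2 (le_of_eq ?_)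
    rw [absjk j k, mul_pow, hAdef]
    congr 1
    rw [hqdef, ← Real.exp_nat_mul, ← Real.exp_nat_mul]
    congr 1
    rw [hxdef]
    push_cast
    ring
  have hsum : ∀ j : ℕ, Summable (fun k => ‖(G (lp.single 2 k 1)) j‖ ^ 2) := by
    intro j
    refine Summable.of_nonneg_of_le (fun k => sq_nonneg _) (fun k => ?_)
      ((summable_geometric_of_lt_one hq0.le hq1).mul_left (A / q ^ j))
    refine le_trans (hfb j k) ?_
    have h1 : q ^ (max j k - min j k) ≤ q ^ k / q ^ j := by
      rw [le_div_iff₀ (by positivity), ← pow_add]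
      exact pow_le_pow_of_le_one hq0.le hq1.le (by omega)
    calc A * q ^ (max j k - min j k) ≤ A * (q ^ k / q ^ j) :=
          mul_le_mul_of_nonneg_left h1 hA0.le
      _ = A / q ^ j * q ^ k := by ring
  have hrow : ∀ j : ℕ,
      (∑' k : ℕ, ‖(G (lp.single 2 k 1)) j‖ ^ 2) ≤ 2 * A * (1 - q)⁻¹ := by
    intro j
    have hS := hsum j
    have hgeoA : Summable (fun m : ℕ => A * q ^ m) :=
      (summable_geometric_of_lt_one hq0.le hq1).mul_left A
    rw [← hS.sum_add_tsum_nat_add j]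
    have htail : (∑' i : ℕ, ‖(G (lp.single 2 (i + j) 1)) j‖ ^ 2) ≤ A * (1 - q)⁻¹ := by
      calc (∑' i : ℕ, ‖(G (lp.single 2 (i + j) 1)) j‖ ^ 2)
          ≤ ∑' i : ℕ, A * q ^ i := by
            refine Summable.tsum_le_tsum (fun i => ?_) ((summable_nat_add_iff j).2 hS) hgeoA
            have h := hfb j (i + j)
            have he : max j (i + j) - min j (i + j) = i := by omega
            rwa [he] at h
        _ = A * (1 - q)⁻¹ := by rw [tsum_mul_left, tsum_geometric_of_lt_one hq0.le hq1]
    have hhead : (∑ k ∈ Finset.range j, ‖(G (lp.single 2 k 1)) j‖ ^ 2)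
        ≤ A * (1 - q)⁻¹ := by
      calc (∑ k ∈ Finset.range j, ‖(G (lp.single 2 k 1)) j‖ ^ 2)
          ≤ ∑ k ∈ Finset.range j, A * q ^ (j - k) := by
            refine Finset.sum_le_sum (fun k hk => ?_)
            have hkj : k < j := Finset.mem_range.1 hk
            have h := hfb j k
            have he : max j k - min j k = j - k := by omega
            rwa [he] at h
        _ = ∑ m ∈ Finset.range j, A * q ^ (m + 1) := by
            rw [← Finset.sum_range_reflect (fun m => A * q ^ (m + 1)) j]
            refine Finset.sum_congr rfl (fun k hk => ?_)
            have hkj : k < j := Finset.mem_range.1 hk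
            have he : j - 1 - k + 1 = j - k := by omega
            simp only [he]
        _ ≤ ∑ m ∈ Finset.range j, A * q ^ m := by
            refine Finset.sum_le_sum (fun m _ => ?_)
            exact mul_le_mul_of_nonneg_left
              (pow_le_pow_of_le_one hq0.le hq1.le (by omega)) hA0.le
        _ ≤ ∑' m : ℕ, A * q ^ m := Summable.sum_le_tsum _ (fun m _ => by positivity) hgeoA
        _ = A * (1 - q)⁻¹ := by rw [tsum_mul_left, tsum_geometric_of_lt_one hq0.le hq1]
    linarith
  have hq_gap : 2 * x * Real.exp (-(2 * d)) ≤ 1 - q := by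
    have hE : Real.exp (2 * x) * Real.exp (-(2 * x)) = 1 := by
      rw [← Real.exp_add]; simp
    have h1 := Real.add_one_le_exp (2 * x)
    have h3 : Real.exp (-(2 * d)) ≤ Real.exp (-(2 * x)) := Real.exp_le_exp.2 (by linarith)
    have hA1 : (2 * x + 1) * Real.exp (-(2 * x)) ≤ Real.exp (2 * x) * Real.exp (-(2 * x)) :=
      mul_le_mul_of_nonneg_right h1 (Real.exp_pos _).le
    rw [hE] at hA1
    have hA2 : 2 * x * Real.exp (-(2 * d)) ≤ 2 * x * Real.exp (-(2 * x)) :=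
      mul_le_mul_of_nonneg_left h3 (by linarith)
    rw [hqdef]
    nlinarith [Real.exp_pos (-(2 * x))]
  have hinv : (1 - q)⁻¹ ≤ Real.exp (2 * d) / (2 * x) := by
    have h1 : (1 - q)⁻¹ ≤ (2 * x * Real.exp (-(2 * d)))⁻¹ :=
      inv_anti₀ (by positivity) hq_gap
    refine le_trans h1 (le_of_eq ?_)
    rw [Real.exp_neg]
    field_simp
  have e2 : (n : ℝ) ^ α * (n : ℝ) ^ (α / 2) = (n : ℝ) ^ (3 * α / 2) := by
    rw [← Real.rpow_add hnpos]; congr 1; ring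
  have hrow2 : ∀ j : ℕ,
      (∑' k : ℕ, ‖(G (lp.single 2 k 1)) j‖ ^ 2) ≤ C₀ * (n : ℝ) ^ (3 * α / 2) := by
    intro j
    refine le_trans (hrow j) ?_
    have h1 : 2 * A * (1 - q)⁻¹ ≤ 2 * A * (Real.exp (2 * d) / (2 * x)) :=
      mul_le_mul_of_nonneg_left hinv (by positivity)
    refine le_trans h1 ?_
    have heq : 2 * A * (Real.exp (2 * d) / (2 * x))
        = (C ^ 2 * Real.exp (2 * d) / d) * (n : ℝ) ^ (3 * α / 2) := by
      rw [hAdef, hxdef, hνneg, ← e2, hα2split]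
      field_simp
    have hpow : (0 : ℝ) ≤ (n : ℝ) ^ (3 * α / 2) := by positivity
    have hfac : (0 : ℝ) ≤ C ^ 2 * Real.exp (2 * d) / d := by positivity
    rw [heq, hC₀def,
      show 2 * C ^ 2 * Real.exp (2 * d) / d = 2 * (C ^ 2 * Real.exp (2 * d) / d) by ring]
    exact mul_le_mul_of_nonneg_right (by linarith) hpow
  calc ∑ j ∈ Finset.Ico m₂ m₁, ∑' k : ℕ, ‖(G (lp.single 2 k 1)) j‖ ^ 2
      ≤ ∑ j ∈ Finset.Ico m₂ m₁, C₀ * (n : ℝ) ^ (3 * α / 2) :=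
        Finset.sum_le_sum (fun j _ => hrow2 j)
    _ = ((m₁ - m₂ : ℕ) : ℝ) * (C₀ * (n : ℝ) ^ (3 * α / 2)) := by
        rw [Finset.sum_const, Nat.card_Ico, nsmul_eq_mul]
    _ = C₀ * (n : ℝ) ^ (3 * α / 2) * ((m₁ : ℝ) - (m₂ : ℝ)) := by
        rw [Nat.cast_sub hm.le]; ring
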